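/- arXiv:2205.06815 — 4 statements merged into one kernel-verified Lean document; each statement's English description precedes it below -/
import Mathlib

section
/- Let ℓ₀ > 0 and define d : ℝ → ℝ by d(X) = (1 + |X|/ℓ₀)·exp(−|X|/ℓ₀). Then for every X ≠ 0, d is four times differentiable at X and satisfies the Euler–Lagrange equation of the fourth-order crack density functional: ℓ₀⁴·d⁗(X) − 2ℓ₀²·d″(X) + d(X) = 0. -/
open Real Filter

private lemma aux_hasDerivAt (l₀ s c a Y : ℝ) :
    HasDerivAt (fun Y : ℝ => (c + a * Y) * Real.exp (-(s * Y) / l₀))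
      ((a - (c + a * Y) * s / l₀) * Real.exp (-(s * Y) / l₀)) Y := by
  have h1 : HasDerivAt (fun Y : ℝ => c + a * Y) a Y := by
    simpa using ((hasDerivAt_id Y).const_mul a).const_add c
  have h3 : HasDerivAt (fun Y : ℝ => -(s * Y) / l₀) (-s / l₀) Y := by
    simpa [neg_div] using (((hasDerivAt_id Y).const_mul s).neg.div_const l₀)
  have h2 : HasDerivAt (fun Y : ℝ => Real.exp (-(s * Y) / l₀))
      ((-s / l₀) * Real.exp (-(s * Y) / l₀)) Y := by
    convert h3.exp using 1; ring
  have : HasDerivAt (fun Y : ℝ => (c + a * Y) * Real.exp (-(s * Y) / l₀))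
      (a * Real.exp (-(s * Y) / l₀) + (c + a * Y) * ((-s / l₀) * Real.exp (-(s * Y) / l₀))) Y :=
    h1.mul h2
  convert this using 1
  ring

private lemma master (l₀ : ℝ) (hl : 0 < l₀) (s : ℝ) (hs : s * s = 1) (X : ℝ)
    (hev : (fun Y : ℝ => (1 + |Y| / l₀) * Real.exp (-|Y| / l₀)) =ᶠ[nhds X]
      (fun Y : ℝ => (1 + s / l₀ * Y) * Real.exp (-(s * Y) / l₀)))
    (habs : |X| = s * X) :
    (∀ k < 4, DifferentiableAt ℝ
      (iteratedDeriv k (fun Y : ℝ => (1 + |Y| / l₀) * Real.exp (-|Y| / l₀))) X) ∧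
    l₀ ^ 4 * iteratedDeriv 4 (fun Y : ℝ => (1 + |Y| / l₀) * Real.exp (-|Y| / l₀)) X -
      2 * l₀ ^ 2 * iteratedDeriv 2 (fun Y : ℝ => (1 + |Y| / l₀) * Real.exp (-|Y| / l₀)) X +
      (1 + |X| / l₀) * Real.exp (-|X| / l₀) = 0 := by
  have hl0 : l₀ ≠ 0 := ne_of_gt hl
  have hd0 : ∀ Y, HasDerivAt (fun Y : ℝ => (1 + s / l₀ * Y) * Real.exp (-(s * Y) / l₀))
      ((0 + -1 / l₀ ^ 2 * Y) * Real.exp (-(s * Y) / l₀)) Y := by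
    intro Y
    convert aux_hasDerivAt l₀ s 1 (s / l₀) Y using 1
    linear_combination (Y / l₀ ^ 2 * Real.exp (-(s * Y) / l₀)) * hs
  have hd1 : ∀ Y, HasDerivAt (fun Y : ℝ => (0 + -1 / l₀ ^ 2 * Y) * Real.exp (-(s * Y) / l₀))
      ((-1 / l₀ ^ 2 + s / l₀ ^ 3 * Y) * Real.exp (-(s * Y) / l₀)) Y := by
    intro Y
    convert aux_hasDerivAt l₀ s 0 (-1 / l₀ ^ 2) Y using 1
    ring
  have hd2 : ∀ Y, HasDerivAt (fun Y : ℝ => (-1 / l₀ ^ 2 + s / l₀ ^ 3 * Y) * Real.exp (-(s * Y) / l₀))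
      ((2 * s / l₀ ^ 3 + -1 / l₀ ^ 4 * Y) * Real.exp (-(s * Y) / l₀)) Y := by
    intro Y
    convert aux_hasDerivAt l₀ s (-1 / l₀ ^ 2) (s / l₀ ^ 3) Y using 1
    linear_combination (Y / l₀ ^ 4 * Real.exp (-(s * Y) / l₀)) * hs
  have hd3 : ∀ Y, HasDerivAt (fun Y : ℝ => (2 * s / l₀ ^ 3 + -1 / l₀ ^ 4 * Y) * Real.exp (-(s * Y) / l₀))
      ((-3 / l₀ ^ 4 + s / l₀ ^ 5 * Y) * Real.exp (-(s * Y) / l₀)) Y := by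
    intro Y
    convert aux_hasDerivAt l₀ s (2 * s / l₀ ^ 3) (-1 / l₀ ^ 4) Y using 1
    linear_combination (2 / l₀ ^ 4 * Real.exp (-(s * Y) / l₀)) * hs
  have hD0 : deriv (fun Y : ℝ => (1 + s / l₀ * Y) * Real.exp (-(s * Y) / l₀)) =
      fun Y : ℝ => (0 + -1 / l₀ ^ 2 * Y) * Real.exp (-(s * Y) / l₀) :=
    funext fun Y => (hd0 Y).deriv
  have hD1 : deriv (fun Y : ℝ => (0 + -1 / l₀ ^ 2 * Y) * Real.exp (-(s * Y) / l₀)) =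
      fun Y : ℝ => (-1 / l₀ ^ 2 + s / l₀ ^ 3 * Y) * Real.exp (-(s * Y) / l₀) :=
    funext fun Y => (hd1 Y).deriv
  have hD2 : deriv (fun Y : ℝ => (-1 / l₀ ^ 2 + s / l₀ ^ 3 * Y) * Real.exp (-(s * Y) / l₀)) =
      fun Y : ℝ => (2 * s / l₀ ^ 3 + -1 / l₀ ^ 4 * Y) * Real.exp (-(s * Y) / l₀) :=
    funext fun Y => (hd2 Y).deriv
  have hD3 : deriv (fun Y : ℝ => (2 * s / l₀ ^ 3 + -1 / l₀ ^ 4 * Y) * Real.exp (-(s * Y) / l₀)) =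
      fun Y : ℝ => (-3 / l₀ ^ 4 + s / l₀ ^ 5 * Y) * Real.exp (-(s * Y) / l₀) :=
    funext fun Y => (hd3 Y).deriv
  have E0 : iteratedDeriv 0 (fun Y : ℝ => (1 + |Y| / l₀) * Real.exp (-|Y| / l₀)) =ᶠ[nhds X]
      fun Y : ℝ => (1 + s / l₀ * Y) * Real.exp (-(s * Y) / l₀) := by
    rw [iteratedDeriv_zero]; exact hev
  have E1 : iteratedDeriv 1 (fun Y : ℝ => (1 + |Y| / l₀) * Real.exp (-|Y| / l₀)) =ᶠ[nhds X]
      fun Y : ℝ => (0 + -1 / l₀ ^ 2 * Y) * Real.exp (-(s * Y) / l₀) := by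
    rw [iteratedDeriv_succ]; exact hD0 ▸ E0.deriv
  have E2 : iteratedDeriv 2 (fun Y : ℝ => (1 + |Y| / l₀) * Real.exp (-|Y| / l₀)) =ᶠ[nhds X]
      fun Y : ℝ => (-1 / l₀ ^ 2 + s / l₀ ^ 3 * Y) * Real.exp (-(s * Y) / l₀) := by
    rw [iteratedDeriv_succ]; exact hD1 ▸ E1.deriv
  have E3 : iteratedDeriv 3 (fun Y : ℝ => (1 + |Y| / l₀) * Real.exp (-|Y| / l₀)) =ᶠ[nhds X]
      fun Y : ℝ => (2 * s / l₀ ^ 3 + -1 / l₀ ^ 4 * Y) * Real.exp (-(s * Y) / l₀) := by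
    rw [iteratedDeriv_succ]; exact hD2 ▸ E2.deriv
  have E4 : iteratedDeriv 4 (fun Y : ℝ => (1 + |Y| / l₀) * Real.exp (-|Y| / l₀)) =ᶠ[nhds X]
      fun Y : ℝ => (-3 / l₀ ^ 4 + s / l₀ ^ 5 * Y) * Real.exp (-(s * Y) / l₀) := by
    rw [iteratedDeriv_succ]; exact hD3 ▸ E3.deriv
  constructor
  · intro k hk
    interval_cases k
    · exact E0.differentiableAt_iff.mpr (hd0 X).differentiableAt
    · exact E1.differentiableAt_iff.mpr (hd1 X).differentiableAt
    · exact E2.differentiableAt_iff.mpr (hd2 X).differentiableAt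
    · exact E3.differentiableAt_iff.mpr (hd3 X).differentiableAt
  · have h2 := E2.eq_of_nhds
    have h4 := E4.eq_of_nhds
    rw [h2, h4, habs]
    have hx : -(s * X) / l₀ = -(s * X / l₀) := by ring
    rw [hx]
    field_simp
    ring

/-- The fourth-order phase-field profile `d(X) = (1 + |X|/ℓ₀) exp (-|X|/ℓ₀)` is
four times differentiable away from `X = 0` and satisfies the Euler–Lagrange
equation `ℓ₀⁴ d⁗ - 2 ℓ₀² d'' + d = 0` there. -/
theorem fourth_order_profile_euler_lagrange (l₀ : ℝ) (hl : 0 < l₀) (X : ℝ) (hX : X ≠ 0) :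
    (∀ k < 4, DifferentiableAt ℝ
      (iteratedDeriv k (fun Y : ℝ => (1 + |Y| / l₀) * Real.exp (-|Y| / l₀))) X) ∧
    l₀ ^ 4 * iteratedDeriv 4 (fun Y : ℝ => (1 + |Y| / l₀) * Real.exp (-|Y| / l₀)) X -
      2 * l₀ ^ 2 * iteratedDeriv 2 (fun Y : ℝ => (1 + |Y| / l₀) * Real.exp (-|Y| / l₀)) X +
      (1 + |X| / l₀) * Real.exp (-|X| / l₀) = 0 := by
  rcases lt_or_gt_of_ne hX with h | h
  · refine master l₀ hl (-1) (by ring) X ?_ (by rw [abs_of_neg h]; ring)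
    filter_upwards [Iio_mem_nhds h] with Y hY
    rw [abs_of_neg hY]
    ring_nf
  · refine master l₀ hl 1 (by ring) X ?_ (by rw [abs_of_pos h]; ring)
    filter_upwards [Ioi_mem_nhds h] with Y hY
    rw [abs_of_pos hY]
    ring_nf
end

section
/- Let ℓ₀ > 0 and let d(X) = (1 + |X|/ℓ₀)·exp(−|X|/ℓ₀), d′(X) = −(X/ℓ₀²)·exp(−|X|/ℓ₀), and d″(X) = (1/ℓ₀²)·(|X|/ℓ₀ − 1)·exp(−|X|/ℓ₀). Then the regularized crack surface measure of the fourth-order phase-field model equals one: ∫_ℝ (1/(4ℓ₀))·( d(X)² + 2ℓ₀²·d′(X)² + ℓ₀⁴·d″(X)² ) dX = 1. -/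
open MeasureTheory Real

/-- The regularized crack surface measure of the fourth-order phase-field
model, evaluated on the optimal profile `d(X) = (1 + |X|/ℓ₀) exp (-|X|/ℓ₀)`,
equals one. -/
theorem fourth_order_crack_surface_measure (l₀ : ℝ) (hl : 0 < l₀) :
    ∫ X : ℝ, (1 / (4 * l₀)) *
      (((1 + |X| / l₀) * Real.exp (-|X| / l₀)) ^ 2 +
        2 * l₀ ^ 2 * ((-(X / l₀ ^ 2)) * Real.exp (-|X| / l₀)) ^ 2 +
        l₀ ^ 4 * ((1 / l₀ ^ 2) * (|X| / l₀ - 1) * Real.exp (-|X| / l₀)) ^ 2) = 1 := by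
  have hl' : l₀ ≠ 0 := hl.ne'
  set b : ℝ := 2 / l₀ with hb
  have hbpos : 0 < b := by positivity
  set f : ℝ → ℝ := fun y => (1 / (4 * l₀)) *
      (((1 + y / l₀) * Real.exp (-y / l₀)) ^ 2 +
        2 * l₀ ^ 2 * ((-(y / l₀ ^ 2)) * Real.exp (-y / l₀)) ^ 2 +
        l₀ ^ 4 * ((1 / l₀ ^ 2) * (y / l₀ - 1) * Real.exp (-y / l₀)) ^ 2) with hf
  have hexpsq : ∀ y : ℝ, Real.exp (-y / l₀) ^ 2 = Real.exp (-(b * y)) := by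
    intro y
    rw [sq, ← Real.exp_add]
    congr 1
    rw [hb]; ring
  -- antiderivative
  set F : ℝ → ℝ := fun y => -Real.exp (-(b * y)) * (1/2 + y/(2*l₀) + y^2/(2*l₀^2)) with hFdef
  have hderiv : ∀ y ∈ Set.Ici (0:ℝ), HasDerivAt F (f y) y := by
    intro y _
    have hexp : HasDerivAt (fun y : ℝ => Real.exp (-(b * y))) (Real.exp (-(b * y)) * (-b)) y := by
      have h2 : HasDerivAt (fun y : ℝ => -(b * y)) (-b) y := by
        simpa using ((hasDerivAt_id y).const_mul b).fun_neg
      simpa [mul_comm, Function.comp_def] using (Real.hasDerivAt_exp (-(b * y))).comp y h2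
    have hP : HasDerivAt (fun y : ℝ => 1/2 + y/(2*l₀) + y^2/(2*l₀^2))
        (1/(2*l₀) + (2*y^1)/(2*l₀^2)) y := by
      have h1 : HasDerivAt (fun y : ℝ => y/(2*l₀)) (1/(2*l₀)) y := by
        simpa using (hasDerivAt_id y).div_const (2*l₀)
      have h2 : HasDerivAt (fun y : ℝ => y^2/(2*l₀^2)) ((2*y^1)/(2*l₀^2)) y := by
        simpa using ((hasDerivAt_id y).pow 2).div_const (2*l₀^2)
      simpa using ((hasDerivAt_const y (1/2 : ℝ)).fun_add h1).fun_add h2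
    have : HasDerivAt F _ y := (hexp.fun_neg.fun_mul hP)
    convert this using 1
    simp only [hf, mul_pow, hexpsq]
    generalize Real.exp (-(b * y)) = E
    rw [hb]
    field_simp
    ring
  have hnonneg : ∀ y ∈ Set.Ioi (0:ℝ), 0 ≤ f y := by
    intro y _
    have h4 : (0:ℝ) < 4 * l₀ := by positivity
    simp only [hf]
    positivity
  have tend : ∀ n : ℕ, Filter.Tendsto (fun y : ℝ => y ^ n * Real.exp (-(b * y)))
      Filter.atTop (nhds 0) := by
    intro n
    have := tendsto_rpow_mul_exp_neg_mul_atTop_nhds_zero (n : ℝ) b hbpos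
    refine this.congr' ?_
    filter_upwards [Filter.eventually_ge_atTop (0:ℝ)] with y _
    rw [Real.rpow_natCast, neg_mul]
  have htend : Filter.Tendsto F Filter.atTop (nhds 0) := by
    have h0 := (tend 0).const_mul (-(1/2 : ℝ))
    have h1 := (tend 1).const_mul (-(1/(2*l₀)))
    have h2 := (tend 2).const_mul (-(1/(2*l₀^2)))
    have h := (h0.add h1).add h2
    simp only [mul_zero, add_zero] at h
    refine h.congr fun y => ?_
    simp only [hFdef, pow_zero, pow_one]
    ring
  have hIoi : ∫ y in Set.Ioi (0:ℝ), f y = 1/2 := by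
    rw [integral_Ioi_of_hasDerivAt_of_nonneg' hderiv hnonneg htend]
    simp [hFdef]
  calc ∫ X : ℝ, (1 / (4 * l₀)) *
      (((1 + |X| / l₀) * Real.exp (-|X| / l₀)) ^ 2 +
        2 * l₀ ^ 2 * ((-(X / l₀ ^ 2)) * Real.exp (-|X| / l₀)) ^ 2 +
        l₀ ^ 4 * ((1 / l₀ ^ 2) * (|X| / l₀ - 1) * Real.exp (-|X| / l₀)) ^ 2)
      = ∫ X : ℝ, f |X| := by
        refine integral_congr_ae (Filter.Eventually.of_forall fun X => ?_)
        simp only [hf]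
        have hx : (-(X / l₀ ^ 2) * Real.exp (-|X| / l₀)) ^ 2
            = (-(|X| / l₀ ^ 2) * Real.exp (-|X| / l₀)) ^ 2 := by
          rw [mul_pow, mul_pow, neg_sq, neg_sq, div_pow, div_pow, sq_abs]
        rw [hx]
    _ = 2 * ∫ y in Set.Ioi (0:ℝ), f y := integral_comp_abs
    _ = 1 := by rw [hIoi]; norm_num
end

section
/- Let ℓ₀ > 0 and let d : ℝ → ℝ be differentiable on ℝ with d(0) = 1, d(X) → 0 as X → +∞ and as X → −∞, and suppose X ↦ d(X)² and X ↦ d′(X)² are integrable on ℝ. Then the second-order crack surface functional is bounded below by one: ∫_ℝ (1/(4ℓ₀))·( d(X)² + 4ℓ₀²·d′(X)² ) dX ≥ 1. (Hence the infimum of the functional over admissible profiles is attained in the limit by the profile exp(−|X|/(2ℓ₀)), whose value is exactly 1.) -/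
open MeasureTheory Filter

/-- Lower bound for the second-order crack surface functional: any
differentiable profile with `d(0) = 1`, decaying at `±∞`, and with square
integrable value and derivative has crack surface functional at least one. -/
theorem second_order_crack_functional_lower_bound (l₀ : ℝ) (hl : 0 < l₀)
    (d : ℝ → ℝ) (hd : Differentiable ℝ d) (h0 : d 0 = 1)
    (htop : Tendsto d atTop (nhds 0)) (hbot : Tendsto d atBot (nhds 0))
    (hi1 : Integrable (fun X : ℝ => (d X) ^ 2))
    (hi2 : Integrable (fun X : ℝ => (deriv d X) ^ 2)) :
    1 ≤ ∫ X : ℝ, (1 / (4 * l₀)) * ((d X) ^ 2 + 4 * l₀ ^ 2 * (deriv d X) ^ 2) := by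
  set g : ℝ → ℝ := fun x => d x ^ 2 with hg_def
  set g' : ℝ → ℝ := fun x => 2 * d x * deriv d x with hg'_def
  have hg : ∀ x, HasDerivAt g (g' x) x := by
    intro x
    simpa [g', mul_comm] using ((hd x).hasDerivAt.fun_pow 2)
  have hgtop : Tendsto g atTop (nhds 0) := by
    simpa using (htop.pow 2)
  have hgbot : Tendsto g atBot (nhds 0) := by
    simpa using (hbot.pow 2)
  have hg'meas : AEStronglyMeasurable g' volume := by
    exact (((measurable_const.mul hd.continuous.measurable).mul
      (measurable_deriv d)).aestronglyMeasurable)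
  have hbound : ∀ x, |g' x| ≤ d x ^ 2 + deriv d x ^ 2 := by
    intro x
    rw [abs_le]
    simp only [hg'_def]
    constructor <;> nlinarith [sq_nonneg (d x + deriv d x), sq_nonneg (d x - deriv d x)]
  have hg'int : Integrable g' := by
    refine (hi1.add hi2).mono' hg'meas ?_
    filter_upwards with x
    simpa using hbound x
  have I1 : ∫ x in Set.Ioi (0:ℝ), g' x = -1 := by
    rw [integral_Ioi_of_hasDerivAt_of_tendsto' (fun x _ => hg x)
      hg'int.integrableOn hgtop]
    simp [g, h0]
  have I2 : ∫ x in Set.Iic (0:ℝ), g' x = 1 := by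
    rw [integral_Iic_of_hasDerivAt_of_tendsto' (fun x _ => hg x)
      hg'int.integrableOn hgbot]
    simp [g, h0]
  have habs : (2:ℝ) ≤ ∫ x, |g' x| := by
    have hsplit : (∫ x in Set.Iic (0:ℝ), |g' x|) + (∫ x in Set.Ioi (0:ℝ), |g' x|)
        = ∫ x, |g' x| := intervalIntegral.integral_Iic_add_Ioi hg'int.abs.integrableOn hg'int.abs.integrableOn
    have h1 : (1:ℝ) ≤ ∫ x in Set.Ioi (0:ℝ), |g' x| := by
      calc (1:ℝ) = |∫ x in Set.Ioi (0:ℝ), g' x| := by rw [I1]; norm_num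
        _ ≤ ∫ x in Set.Ioi (0:ℝ), |g' x| := by
          simpa [Real.norm_eq_abs] using
            norm_integral_le_integral_norm (μ := volume.restrict (Set.Ioi 0)) g'
    have h2 : (1:ℝ) ≤ ∫ x in Set.Iic (0:ℝ), |g' x| := by
      calc (1:ℝ) = |∫ x in Set.Iic (0:ℝ), g' x| := by rw [I2]; norm_num
        _ ≤ ∫ x in Set.Iic (0:ℝ), |g' x| := by
          simpa [Real.norm_eq_abs] using
            norm_integral_le_integral_norm (μ := volume.restrict (Set.Iic 0)) g'
    linarith
  have hptwise : ∀ x, |g' x| / 2 ≤ (1 / (4 * l₀)) * (d x ^ 2 + 4 * l₀ ^ 2 * (deriv d x) ^ 2) := by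
    intro x
    simp only [hg'_def]
    have key : 2 * l₀ * |2 * d x * deriv d x| ≤ d x ^ 2 + 4 * l₀ ^ 2 * deriv d x ^ 2 := by
      rcases abs_cases (2 * d x * deriv d x) with ⟨h, _⟩ | ⟨h, _⟩ <;> rw [h] <;>
        nlinarith [sq_nonneg (d x - 2 * l₀ * deriv d x), sq_nonneg (d x + 2 * l₀ * deriv d x)]
    rw [one_div, inv_mul_eq_div, le_div_iff₀ (by positivity : (0:ℝ) < 4 * l₀)]
    have heq : |2 * d x * deriv d x| / 2 * (4 * l₀) = 2 * l₀ * |2 * d x * deriv d x| := by ring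
    linarith [key, heq.le, heq.ge]
  have hrhsint : Integrable (fun X : ℝ =>
      (1 / (4 * l₀)) * ((d X) ^ 2 + 4 * l₀ ^ 2 * (deriv d X) ^ 2)) :=
    (hi1.add (hi2.const_mul _)).const_mul _
  have hmono : (∫ x, |g' x| / 2)
      ≤ ∫ X : ℝ, (1 / (4 * l₀)) * ((d X) ^ 2 + 4 * l₀ ^ 2 * (deriv d X) ^ 2) :=
    integral_mono (hg'int.abs.div_const 2) hrhsint hptwise
  have : (∫ x, |g' x| / 2) = (∫ x, |g' x|) / 2 := integral_div 2 _
  linarith [habs, hmono, this]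
end

section
/- Let n ∈ ℕ, μ ∈ ℝ, and define W̄ : Matrix (Fin n) (Fin n) ℝ → ℝ by W̄(A) = (μ/2)·[ (det A)^(−1/3)·trace(A) − 3 ], using the real power x ↦ x^(−1/3) for x > 0. Then at every matrix C with det C > 0, W̄ is Fréchet differentiable with derivative H ↦ (μ/2)·(det C)^(−1/3)·[ trace(H) − (1/3)·trace(C)·trace(C⁻¹·H) ]. Equivalently, the isochoric second Piola–Kirchhoff stress S̄ = 2·∂W̄/∂C equals μ·(det C)^(−1/3)·[ I − (1/3)·trace(C)·C⁻¹ ], i.e. the derivative in direction H equals (1/2)·trace(S̄·H) whenever C is symmetric. -/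
open Matrix

attribute [local instance] Matrix.normedAddCommGroup Matrix.normedSpace

section Aux

variable {n : ℕ}

/-- Determinant as a continuous multilinear map in the rows. -/
noncomputable def detCM (n : ℕ) :
    ContinuousMultilinearMap ℝ (fun _ : Fin n => Fin n → ℝ) ℝ where
  toMultilinearMap :=
    (Matrix.detRowAlternating : (Fin n → ℝ) [⋀^Fin n]→ₗ[ℝ] ℝ).toMultilinearMap
  cont := by
    show Continuous fun m : Matrix (Fin n) (Fin n) ℝ => m.det
    exact continuous_id.matrix_det

lemma detCM_apply (A : Matrix (Fin n) (Fin n) ℝ) : detCM n A = A.det := rfl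

lemma sum_det_updateRow (C H : Matrix (Fin n) (Fin n) ℝ) :
    ∑ i, (C.updateRow i (H i)).det = Matrix.trace (C.adjugate * H) := by
  have h : ∀ i, (C.updateRow i (H i)).det = ∑ j, C.adjugate j i * H i j := by
    intro i
    rw [← Matrix.cramer_transpose_apply, Matrix.cramer_eq_adjugate_mulVec]
    simp [Matrix.mulVec, dotProduct, ← Matrix.adjugate_transpose, Matrix.transpose_apply,
      mul_comm]
  simp only [h, Matrix.trace, Matrix.diag, Matrix.mul_apply]
  exact Finset.sum_comm

/-- Jacobi's formula: derivative of `det` at `C` is `H ↦ trace (adjugate C * H)`. -/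
lemma hasFDerivAt_det (C : Matrix (Fin n) (Fin n) ℝ) :
    HasFDerivAt (fun A : Matrix (Fin n) (Fin n) ℝ => A.det)
      (LinearMap.toContinuousLinearMap
        ((Matrix.traceLinearMap (Fin n) ℝ ℝ).comp (LinearMap.mulLeft ℝ C.adjugate))) C := by
  have h := (detCM n).hasFDerivAt (x := C)
  refine h.congr_fderiv ?_
  refine ContinuousLinearMap.ext fun H => ?_
  erw [ContinuousMultilinearMap.linearDeriv_apply]
  exact sum_det_updateRow C H

end Aux

/-- The deviatoric (isochoric) strain energy
`W̄(C) = (μ/2)[(det C)^(-1/3) trace C - 3]` is Fréchet differentiable at every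
`C` with `det C > 0`, with derivative
`H ↦ (μ/2)(det C)^(-1/3)[trace H - (1/3) trace C · trace(C⁻¹ H)]`;
equivalently (for symmetric `C`), the derivative in direction `H` equals
`(1/2) trace(S̄ H)` with `S̄ = μ (det C)^(-1/3) (I - (1/3) trace C · C⁻¹)`. -/
theorem isochoric_energy_fderiv (n : ℕ) (μ : ℝ) (C : Matrix (Fin n) (Fin n) ℝ)
    (hC : 0 < C.det) :
    HasFDerivAt (fun A : Matrix (Fin n) (Fin n) ℝ =>
        (μ / 2) * (A.det ^ (-(1 : ℝ) / 3) * A.trace - 3))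
      (LinearMap.toContinuousLinearMap
        (((μ / 2) * C.det ^ (-(1 : ℝ) / 3)) •
          (Matrix.traceLinearMap (Fin n) ℝ ℝ -
            ((1 / 3) * C.trace) •
              ((Matrix.traceLinearMap (Fin n) ℝ ℝ).comp (LinearMap.mulLeft ℝ C⁻¹))))) C ∧
    (Cᵀ = C → ∀ H : Matrix (Fin n) (Fin n) ℝ,
      (μ / 2) * C.det ^ (-(1 : ℝ) / 3) *
          (Matrix.trace H - (1 / 3) * C.trace * Matrix.trace (C⁻¹ * H)) =
        (1 / 2) * Matrix.trace
          (((μ * C.det ^ (-(1 : ℝ) / 3)) • (1 - ((1 / 3) * C.trace) • C⁻¹)) * H)) := by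
  have hdne : C.det ≠ 0 := ne_of_gt hC
  set p : ℝ := -(1 : ℝ) / 3 with hp
  constructor
  · -- derivative of the rpow part
    have hr : HasDerivAt (fun x : ℝ => x ^ p) (p * C.det ^ (p - 1)) C.det :=
      Real.hasDerivAt_rpow_const (Or.inl hdne)
    have hg : HasFDerivAt (fun A : Matrix (Fin n) (Fin n) ℝ => A.det ^ p)
        ((p * C.det ^ (p - 1)) • (LinearMap.toContinuousLinearMap
          ((Matrix.traceLinearMap (Fin n) ℝ ℝ).comp (LinearMap.mulLeft ℝ C.adjugate)))) C :=
      hr.comp_hasFDerivAt C (hasFDerivAt_det C)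
    have ht : HasFDerivAt (fun A : Matrix (Fin n) (Fin n) ℝ => A.trace)
        (LinearMap.toContinuousLinearMap (Matrix.traceLinearMap (Fin n) ℝ ℝ)) C :=
      (LinearMap.toContinuousLinearMap (Matrix.traceLinearMap (Fin n) ℝ ℝ)).hasFDerivAt
    have hmul := (hg.mul ht).sub_const (3 : ℝ)
    have hfinal := hmul.const_mul (μ / 2)
    refine hfinal.congr_fderiv (Eq.symm ?_)
    refine ContinuousLinearMap.ext fun H => ?_
    change _ = μ / 2 * (C.det ^ p * Matrix.trace H +
      C.trace * ((p * C.det ^ (p - 1)) * Matrix.trace (C.adjugate * H)))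
    have hadj : C.adjugate = C.det • C⁻¹ := by
      rw [Matrix.inv_def, smul_smul, Ring.inverse_eq_inv', mul_inv_cancel₀ hdne, one_smul]
    have hpow : C.det ^ (p - 1) * C.det = C.det ^ p := by
      rw [Real.rpow_sub_one hdne]
      field_simp
    simp only [ContinuousLinearMap.coe_smul', Pi.smul_apply, ContinuousLinearMap.add_apply,
      ContinuousLinearMap.smul_apply, LinearMap.coe_toContinuousLinearMap',
      LinearMap.smul_apply, LinearMap.sub_apply, LinearMap.coe_comp, Function.comp_apply,
      LinearMap.mulLeft_apply, Matrix.traceLinearMap_apply, smul_eq_mul, hadj,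
      Matrix.smul_mul, Matrix.trace_smul]
    linear_combination (μ * C.trace * Matrix.trace (C⁻¹ * H) / 6) * hpow
  · intro _ H
    simp only [Matrix.smul_mul, Matrix.trace_smul, Matrix.sub_mul, Matrix.trace_sub,
      Matrix.one_mul, smul_eq_mul]
    ring
end
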